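/- Let μ be a compactly supported Borel probability measure on ℝⁿ, λ : ℝⁿ → ℝ continuous, g : ℝ → ℝⁿ continuously differentiable, and τ : ℝⁿ → ℝ continuous and bounded. Then the function F(ε) = ½ ∫ ‖g(λ(x) + ε·τ(x)) − x‖² dμ(x) is differentiable at ε = 0 with derivative F'(0) = ∫ ⟨g(λ(x)) − x, g'(λ(x))⟩ · τ(x) dμ(x). -/

import Mathlib

open MeasureTheory

/-- The Gâteaux derivative (first variation) of the unsupervised least squares risk
with respect to the encoder `lam` in the direction `τ`. -/
theorem gateaux_derivative_uls_risk_encoder {n : ℕ}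
    (μ : Measure (EuclideanSpace ℝ (Fin n))) [IsProbabilityMeasure μ]
    (hsupp : ∃ K : Set (EuclideanSpace ℝ (Fin n)), IsCompact K ∧ μ Kᶜ = 0)
    (lam : EuclideanSpace ℝ (Fin n) → ℝ) (hlam : Continuous lam)
    (g : ℝ → EuclideanSpace ℝ (Fin n)) (hg : ContDiff ℝ 1 g)
    (τ : EuclideanSpace ℝ (Fin n) → ℝ) (hτ : Continuous τ) (hτb : ∃ C, ∀ x, |τ x| ≤ C) :
    HasDerivAt (fun ε : ℝ => (1 / 2 : ℝ) * ∫ x, ‖g (lam x + ε * τ x) - x‖ ^ 2 ∂μ)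
      (∫ x, (inner ℝ (g (lam x) - x) (deriv g (lam x)) : ℝ) * τ x ∂μ) 0 := by
  obtain ⟨K, hK, hKc⟩ := hsupp
  obtain ⟨C, hC⟩ := hτb
  have hC0 : 0 ≤ C := le_trans (abs_nonneg _) (hC 0)
  -- bounds on K
  obtain ⟨M1, hM1⟩ := hK.exists_bound_of_continuousOn hlam.continuousOn
  have hM1' : ∀ a ∈ K, |lam a| ≤ max M1 0 := fun a ha =>
    le_trans (hM1 a ha) (le_max_left _ _)
  set L : ℝ := max M1 0 + C with hL
  obtain ⟨M2, hM2⟩ := hK.exists_bound_of_continuousOn continuousOn_id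
  have hM2' : ∀ a ∈ K, ‖a‖ ≤ max M2 0 := fun a ha =>
    le_trans (hM2 a ha) (le_max_left _ _)
  have hgd : Differentiable ℝ g := hg.differentiable one_ne_zero
  have hgc : Continuous g := hgd.continuous
  have hg'c : Continuous (deriv g) := hg.continuous_deriv le_rfl
  -- bounds on g and deriv g on [-L, L]
  obtain ⟨Mg, hMg⟩ := (isCompact_Icc (a := -L) (b := L)).exists_bound_of_continuousOn
    hgc.continuousOn
  have hMg' : ∀ t ∈ Set.Icc (-L) L, ‖g t‖ ≤ max Mg 0 := fun t ht =>
    le_trans (hMg t ht) (le_max_left _ _)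
  obtain ⟨Md, hMd⟩ := (isCompact_Icc (a := -L) (b := L)).exists_bound_of_continuousOn
    hg'c.continuousOn
  have hMd' : ∀ t ∈ Set.Icc (-L) L, ‖deriv g t‖ ≤ max Md 0 := fun t ht =>
    le_trans (hMd t ht) (le_max_left _ _)
  have haeK : ∀ᵐ a ∂μ, a ∈ K := by
    rw [MeasureTheory.ae_iff]
    exact hKc
  have htmem : ∀ a ∈ K, ∀ x ∈ Metric.ball (0:ℝ) 1, lam a + x * τ a ∈ Set.Icc (-L) L := by
    intro a ha x hx
    have hx1 : |x| ≤ 1 := le_of_lt (by simpa [Real.dist_eq] using hx)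
    have : |lam a + x * τ a| ≤ L := by
      calc |lam a + x * τ a| ≤ |lam a| + |x * τ a| := abs_add_le _ _
        _ ≤ max M1 0 + 1 * C := by
            gcongr
            · exact hM1' a ha
            · rw [abs_mul]
              exact mul_le_mul hx1 (hC a) (abs_nonneg _) zero_le_one
        _ = L := by rw [hL]; ring
    exact abs_le.mp this
  -- define F and F'
  set F : ℝ → EuclideanSpace ℝ (Fin n) → ℝ := fun x a => ‖g (lam a + x * τ a) - a‖ ^ 2 with hF
  set F' : ℝ → EuclideanSpace ℝ (Fin n) → ℝ := fun x a =>
    2 * ((inner ℝ (g (lam a + x * τ a) - a) (deriv g (lam a + x * τ a)) : ℝ) * τ a) with hF'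
  have hFmeas : ∀ x : ℝ, AEStronglyMeasurable (F x) μ := by
    intro x
    exact (Continuous.aestronglyMeasurable (by fun_prop))
  have hF'meas : AEStronglyMeasurable (F' 0) μ := by
    apply Continuous.aestronglyMeasurable
    apply Continuous.mul continuous_const
    apply Continuous.mul _ hτ
    exact (continuous_inner.comp (((hgc.comp (by fun_prop)).sub continuous_id).prodMk
      (hg'c.comp (by fun_prop))))
  have hdiff : ∀ᵐ a ∂μ, ∀ x ∈ Metric.ball (0:ℝ) 1, HasDerivAt (F · a) (F' x a) x := by
    filter_upwards with a
    intro x _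
    set t := lam a + x * τ a with ht
    have h1 : HasDerivAt (fun x : ℝ => lam a + x * τ a) (τ a) x := by
      simpa using ((hasDerivAt_id x).mul_const (τ a)).const_add (lam a)
    have h2 : HasDerivAt g (deriv g t) t := (hgd t).hasDerivAt
    have h3 : HasDerivAt (fun x : ℝ => g (lam a + x * τ a)) (τ a • deriv g t) x :=
      HasDerivAt.scomp x h2 h1
    have h4 : HasDerivAt (fun x : ℝ => g (lam a + x * τ a) - a) (τ a • deriv g t) x :=
      h3.sub_const a
    have h5 := HasDerivAt.inner ℝ h4 h4
    have heq1 : (fun x : ℝ => (inner ℝ (g (lam a + x * τ a) - a) (g (lam a + x * τ a) - a) : ℝ))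
        = (F · a) := by
      funext y
      simp only [hF]
      exact real_inner_self_eq_norm_sq _
    rw [heq1] at h5
    refine h5.congr_deriv ?_
    show _ = 2 * ((inner ℝ (g (lam a + x * τ a) - a) (deriv g (lam a + x * τ a)) : ℝ) * τ a)
    rw [real_inner_smul_right, real_inner_smul_left,
      real_inner_comm (g (lam a + x * τ a) - a) (deriv g (lam a + x * τ a))]
    ring
  have hbound : ∀ᵐ a ∂μ, ∀ x ∈ Metric.ball (0:ℝ) 1,
      ‖F' x a‖ ≤ 2 * ((max Mg 0 + max M2 0) * max Md 0 * C) := by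
    filter_upwards [haeK] with a ha
    intro x hx
    have htm := htmem a ha x hx
    have hnu : ‖g (lam a + x * τ a) - a‖ ≤ max Mg 0 + max M2 0 :=
      le_trans (norm_sub_le _ _) (add_le_add (hMg' _ htm) (hM2' a ha))
    have hin : |(inner ℝ (g (lam a + x * τ a) - a) (deriv g (lam a + x * τ a)) : ℝ)|
        ≤ (max Mg 0 + max M2 0) * max Md 0 :=
      le_trans (abs_real_inner_le_norm _ _)
        (mul_le_mul hnu (hMd' _ htm) (norm_nonneg _) (by positivity))
    calc ‖F' x a‖ = 2 * (|(inner ℝ (g (lam a + x * τ a) - a) (deriv g (lam a + x * τ a)) : ℝ)|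
          * |τ a|) := by
            rw [hF']
            simp [Real.norm_eq_abs, abs_mul]
      _ ≤ 2 * ((max Mg 0 + max M2 0) * max Md 0 * C) := by
            apply mul_le_mul_of_nonneg_left _ (by norm_num)
            exact mul_le_mul hin (hC a) (abs_nonneg _) (le_trans (abs_nonneg _) hin)
  have hFint : Integrable (F 0) μ := by
    apply Integrable.mono' (integrable_const ((max Mg 0 + max M2 0) ^ 2)) (hFmeas 0)
    filter_upwards [haeK] with a ha
    have htm := htmem a ha 0 (Metric.mem_ball_self one_pos)
    have hnu : ‖g (lam a + 0 * τ a) - a‖ ≤ max Mg 0 + max M2 0 :=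
      le_trans (norm_sub_le _ _) (add_le_add (hMg' _ htm) (hM2' a ha))
    rw [hF]
    simp only [Real.norm_eq_abs, abs_pow, abs_norm]
    exact pow_le_pow_left₀ (norm_nonneg _) hnu 2
  have main := hasDerivAt_integral_of_dominated_loc_of_deriv_le (μ := μ) (F := F) (F' := F')
    (Metric.ball_mem_nhds 0 one_pos) (Filter.Eventually.of_forall hFmeas) hFint hF'meas hbound
    (integrable_const _) hdiff
  have hmain := main.2
  have h12 := hmain.const_mul (1 / 2 : ℝ)
  have hfin : (1 / 2 : ℝ) * ∫ a, F' 0 a ∂μ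
      = ∫ x, (inner ℝ (g (lam x) - x) (deriv g (lam x)) : ℝ) * τ x ∂μ := by
    rw [hF']
    simp only [zero_mul, add_zero]
    rw [MeasureTheory.integral_const_mul]
    ring
  rw [hfin] at h12
  exact h12
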